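/- Let X ⊆ ℂ^n be a set whose tangent cone at infinity C_∞(X) is a complex linear subspace L, and choose coordinates (x,y) with L = {(x,y) : y = 0}. Then there exist a constant C > 0 and a compact set K ⊆ ℂ^n such that ‖y‖ ≤ C‖x‖ for all (x,y) ∈ X \ K. -/

import Mathlib

open Set Filter Metric

/-- `E` is a tangent cone of `X` at infinity: for some sequence `t_j → ∞`, the rescaled
sphere slices `(1/t_j)(X ∩ {‖x‖ = t_j})` converge in the Hausdorff sense to a subset `D`
of the unit sphere, and `E` is the cone over `D`. -/
def IsTangentConeAtInfinity {V : Type*} [NormedAddCommGroup V] [NormedSpace ℝ V]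
    (X E : Set V) : Prop :=
  ∃ (t : ℕ → ℝ) (D : Set V),
    (∀ j, 0 < t j) ∧ Tendsto t atTop atTop ∧ D ⊆ Metric.sphere (0 : V) 1 ∧
    Tendsto (fun j => EMetric.hausdorffEdist
        ((fun x => (t j)⁻¹ • x) '' (X ∩ Metric.sphere (0 : V) (t j))) D) atTop (nhds 0) ∧
    E = {x | ∃ s : ℝ, 0 ≤ s ∧ ∃ v ∈ D, x = s • v}

/-- In coordinates `ℂⁿ = ℂᵈ × ℂᵉ`, the first (`x`) component of `z`. -/
def xPart {d e : ℕ} (z : EuclideanSpace ℂ (Fin (d + e))) : EuclideanSpace ℂ (Fin d) :=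
  WithLp.toLp 2 (fun i => z (Fin.castAdd e i))

/-- In coordinates `ℂⁿ = ℂᵈ × ℂᵉ`, the second (`y`) component of `z`. -/
def yPart {d e : ℕ} (z : EuclideanSpace ℂ (Fin (d + e))) : EuclideanSpace ℂ (Fin e) :=
  WithLp.toLp 2 (fun i => z (Fin.natAdd d i))

lemma norm_xPart_le {d e : ℕ} (z : EuclideanSpace ℂ (Fin (d + e))) : ‖xPart z‖ ≤ ‖z‖ := by
  rw [EuclideanSpace.norm_eq, EuclideanSpace.norm_eq]
  apply Real.sqrt_le_sqrt
  rw [Fin.sum_univ_add (f := fun i => ‖z i‖ ^ 2)]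
  refine le_add_of_nonneg_right ?_
  exact Finset.sum_nonneg fun i _ => sq_nonneg _

lemma norm_yPart_le {d e : ℕ} (z : EuclideanSpace ℂ (Fin (d + e))) : ‖yPart z‖ ≤ ‖z‖ := by
  rw [EuclideanSpace.norm_eq, EuclideanSpace.norm_eq]
  apply Real.sqrt_le_sqrt
  rw [Fin.sum_univ_add (f := fun i => ‖z i‖ ^ 2)]
  refine le_add_of_nonneg_left ?_
  exact Finset.sum_nonneg fun i _ => sq_nonneg _

lemma xPart_sub {d e : ℕ} (a b : EuclideanSpace ℂ (Fin (d + e))) :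
    xPart (a - b) = xPart a - xPart b := by
  ext i; simp [xPart]

lemma xPart_smul {d e : ℕ} (s : ℝ) (a : EuclideanSpace ℂ (Fin (d + e))) :
    xPart (s • a) = s • xPart a := by
  ext i; simp [xPart]

lemma lipschitz_xPart {d e : ℕ} : LipschitzWith 1 (xPart (d := d) (e := e)) := by
  apply LipschitzWith.of_dist_le_mul
  intro a b
  rw [NNReal.coe_one, one_mul, dist_eq_norm, dist_eq_norm, ← xPart_sub]
  exact norm_xPart_le _

lemma eq_zero_of_parts {d e : ℕ} {v : EuclideanSpace ℂ (Fin (d + e))}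
    (hx : xPart v = 0) (hy : yPart v = 0) : v = 0 := by
  ext i
  refine Fin.addCases (motive := fun i => v i = (0 : EuclideanSpace ℂ (Fin (d + e))) i)
    (fun i => ?_) (fun i => ?_) i
  · have := congrArg (fun w => w i) hx; simpa [xPart] using this
  · have := congrArg (fun w => w i) hy; simpa [yPart] using this


/-- If the tangent cone at infinity of `X ⊆ ℂⁿ` is the linear subspace
`L = {(x,y) : y = 0}` (in coordinates `ℂⁿ = ℂᵈ × ℂᵉ`), then there are `C > 0` and a
compact `K` with `‖y‖ ≤ C ‖x‖` for all `(x,y) ∈ X \ K`. -/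
theorem y_dominated_by_x_outside_compact (d e : ℕ)
    (X : Set (EuclideanSpace ℂ (Fin (d + e))))
    (L : Set (EuclideanSpace ℂ (Fin (d + e))))
    (hL : L = {z | yPart z = 0})
    (hcone : IsTangentConeAtInfinity X L)
    (huniq : ∀ E, IsTangentConeAtInfinity X E → E = L) :
    ∃ C : ℝ, 0 < C ∧ ∃ K : Set (EuclideanSpace ℂ (Fin (d + e))), IsCompact K ∧
      ∀ z ∈ X \ K, ‖yPart z‖ ≤ C * ‖xPart z‖ := by
  classical
  by_contra hcon
  push_neg at hcon
  have hsel : ∀ k : ℕ, ∃ w : EuclideanSpace ℂ (Fin (d + e)),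
      w ∈ X ∧ ((k : ℝ) + 1) < ‖w‖ ∧ ((k : ℝ) + 1) * ‖xPart w‖ < ‖yPart w‖ := by
    intro k
    obtain ⟨w, hw, hlt⟩ := hcon ((k : ℝ) + 1) (by positivity) (closedBall 0 ((k : ℝ) + 1))
      (isCompact_closedBall _ _)
    have h2 : ¬ ‖w‖ ≤ (k : ℝ) + 1 := by
      simpa [mem_closedBall, dist_zero_right] using hw.2
    exact ⟨w, hw.1, lt_of_not_ge h2, hlt⟩
  choose z hzX hznorm hzlt using hsel
  set t : ℕ → ℝ := fun k => ‖z k‖ with ht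
  have htpos : ∀ k, 0 < t k := fun k => lt_trans (by positivity) (hznorm k)
  set p : ℕ → EuclideanSpace ℂ (Fin (d + e)) := fun k => (t k)⁻¹ • z k with hp
  have hp_sphere : ∀ k, p k ∈ sphere (0 : EuclideanSpace ℂ (Fin (d + e))) 1 := by
    intro k
    rw [mem_sphere_zero_iff_norm, hp, norm_smul, Real.norm_eq_abs,
      abs_of_pos (inv_pos.2 (htpos k))]
    exact inv_mul_cancel₀ (ne_of_gt (htpos k))
  have hzmem : ∀ k, z k ∈ X ∩ sphere (0 : EuclideanSpace ℂ (Fin (d + e))) (t k) :=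
    fun k => ⟨hzX k, by rw [mem_sphere_zero_iff_norm]⟩
  set S : ℕ → Set (EuclideanSpace ℂ (Fin (d + e))) :=
    fun k => (fun x => (t k)⁻¹ • x) '' (X ∩ sphere (0 : EuclideanSpace ℂ (Fin (d + e))) (t k))
    with hS
  have hpS : ∀ k, p k ∈ S k := fun k => ⟨z k, hzmem k, rfl⟩
  have hSsub : ∀ k, S k ⊆ sphere (0 : EuclideanSpace ℂ (Fin (d + e))) 1 := by
    rintro k _ ⟨w, ⟨-, hw⟩, rfl⟩
    rw [mem_sphere_zero_iff_norm] at hw ⊢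
    rw [norm_smul, Real.norm_eq_abs, abs_of_pos (inv_pos.2 (htpos k)), hw]
    exact inv_mul_cancel₀ (ne_of_gt (htpos k))
  -- extract a convergent subsequence of the points p
  obtain ⟨v, hv_sphere, φ, hφ, hpφ⟩ :=
    (isCompact_sphere (0 : EuclideanSpace ℂ (Fin (d + e))) 1).tendsto_subseq hp_sphere
  -- extract a Hausdorff-convergent subsequence of the slices
  letI : TopologicalSpace
      (TopologicalSpace.Closeds (sphere (0 : EuclideanSpace ℂ (Fin (d + e))) 1)) :=
    UniformSpace.toTopologicalSpace
  haveI : CompactSpace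
      (TopologicalSpace.Closeds (sphere (0 : EuclideanSpace ℂ (Fin (d + e))) 1)) :=
    inferInstance
  set A : ℕ → TopologicalSpace.Closeds (sphere (0 : EuclideanSpace ℂ (Fin (d + e))) 1) :=
    fun k => ⟨closure (((↑) : (sphere (0 : EuclideanSpace ℂ (Fin (d + e))) 1) →
      EuclideanSpace ℂ (Fin (d + e))) ⁻¹' S (φ k)), isClosed_closure⟩ with hA
  obtain ⟨D₀, ψ, hψ, hAψ⟩ := CompactSpace.tendsto_subseq A
  set σ : ℕ → ℕ := φ ∘ ψ with hσdef
  have hσ : StrictMono σ := hφ.comp hψ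
  set D : Set (EuclideanSpace ℂ (Fin (d + e))) :=
    ((↑) : (sphere (0 : EuclideanSpace ℂ (Fin (d + e))) 1) → EuclideanSpace ℂ (Fin (d + e)))
      '' (D₀ : Set _) with hD
  have hedist : Tendsto (fun j => edist (A (ψ j)) D₀) atTop (nhds 0) := by
    simpa [edist_self] using hAψ.edist (tendsto_const_nhds (x := D₀) (f := atTop))
  have hH : Tendsto (fun j => EMetric.hausdorffEdist (S (σ j)) D) atTop (nhds 0) := by
    have hedist' := hedist
    simp only [EMetric.Closeds.edist_eq] at hedist'
    refine Tendsto.congr (fun j => ?_) hedist'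
    have hAcoe : ((A (ψ j) : Set (sphere (0 : EuclideanSpace ℂ (Fin (d + e))) 1))) =
        closure (Subtype.val ⁻¹' S (σ j)) := rfl
    rw [hAcoe, EMetric.hausdorffEdist_closure₁,
      ← EMetric.hausdorffEdist_image (Φ := (Subtype.val :
        (sphere (0 : EuclideanSpace ℂ (Fin (d + e))) 1) → EuclideanSpace ℂ (Fin (d + e))))
        isometry_subtype_coe]
    congr 1
    rw [Subtype.image_preimage_coe]
    exact inter_eq_self_of_subset_right (hSsub (σ j))
  have hD_sub : D ⊆ sphere (0 : EuclideanSpace ℂ (Fin (d + e))) 1 := by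
    rintro _ ⟨u, -, rfl⟩; exact u.2
  have htσ : Tendsto (fun j => t (σ j)) atTop atTop := by
    have hmono : ∀ j : ℕ, ((j : ℝ) + 1) ≤ t (σ j) := by
      intro j
      refine le_trans ?_ (le_of_lt (hznorm (σ j)))
      have : (j : ℝ) ≤ (σ j : ℝ) := Nat.cast_le.2 hσ.le_apply
      linarith
    exact tendsto_atTop_mono hmono
      (tendsto_atTop_add_const_right _ 1 tendsto_natCast_atTop_atTop)
  set E : Set (EuclideanSpace ℂ (Fin (d + e))) :=
    {x | ∃ s : ℝ, 0 ≤ s ∧ ∃ w ∈ D, x = s • w} with hEdef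
  have hconeE : IsTangentConeAtInfinity X E :=
    ⟨fun j => t (σ j), D, fun j => htpos _, htσ, hD_sub, hH, rfl⟩
  have hE : E = L := huniq E hconeE
  -- v belongs to D
  have hpv : Tendsto (fun j => p (σ j)) atTop (nhds v) := hpφ.comp hψ.tendsto_atTop
  have hev : Tendsto (fun j => edist v (p (σ j))) atTop (nhds 0) := by
    simpa [edist_self] using
      (tendsto_const_nhds (x := v) (f := atTop)).edist hpv
  have hsum : Tendsto
      (fun j => EMetric.hausdorffEdist (S (σ j)) D + edist v (p (σ j))) atTop (nhds 0) := by
    simpa using hH.add hev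
  have hinf : EMetric.infEdist v D = 0 := by
    refine le_antisymm ?_ zero_le
    refine le_of_tendsto_of_tendsto' tendsto_const_nhds hsum (fun j => ?_)
    calc EMetric.infEdist v D
        ≤ EMetric.infEdist (p (σ j)) D + edist v (p (σ j)) :=
          EMetric.infEdist_le_infEdist_add_edist
      _ ≤ EMetric.hausdorffEdist (S (σ j)) D + edist v (p (σ j)) :=
          add_le_add_left (EMetric.infEdist_le_hausdorffEdist_of_mem (hpS (σ j))) _
  have hDc : IsClosed D := (D₀.2.isCompact.image continuous_subtype_val).isClosed
  have hvD : v ∈ D := (EMetric.mem_iff_infEdist_zero_of_closed hDc).2 hinf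
  have hvE : v ∈ E := ⟨1, zero_le_one, v, hvD, (one_smul ℝ v).symm⟩
  have hyv : yPart v = 0 := by
    have := hE ▸ hvE
    rw [hL] at this
    exact this
  -- x-part of v vanishes
  have hx1 : Tendsto (fun j => xPart (p (σ j))) atTop (nhds (xPart v)) :=
    (lipschitz_xPart.continuous.tendsto v).comp hpv
  have hxp : ∀ k, ‖xPart (p k)‖ ≤ ((k : ℝ) + 1)⁻¹ := by
    intro k
    have hyz : ‖yPart (z k)‖ ≤ t k := norm_yPart_le (z k)
    have h2 : ((k : ℝ) + 1) * ‖xPart (z k)‖ ≤ t k := le_trans (le_of_lt (hzlt k)) hyz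
    have hxb : ‖xPart (z k)‖ ≤ t k * ((k : ℝ) + 1)⁻¹ := by
      rw [← div_eq_mul_inv, le_div_iff₀ (by positivity : (0 : ℝ) < (k : ℝ) + 1), mul_comm]
      exact h2
    have heq : xPart (p k) = (t k)⁻¹ • xPart (z k) := xPart_smul _ _
    rw [heq, norm_smul, Real.norm_eq_abs, abs_of_pos (inv_pos.2 (htpos k))]
    calc (t k)⁻¹ * ‖xPart (z k)‖
        ≤ (t k)⁻¹ * (t k * ((k : ℝ) + 1)⁻¹) :=
          mul_le_mul_of_nonneg_left hxb (inv_nonneg.2 (le_of_lt (htpos k)))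
      _ = ((k : ℝ) + 1)⁻¹ := by
          rw [← mul_assoc, inv_mul_cancel₀ (ne_of_gt (htpos k)), one_mul]
  have hx0 : Tendsto (fun j => xPart (p (σ j))) atTop (nhds 0) := by
    have hbound : ∀ j : ℕ, ‖xPart (p (σ j))‖ ≤ ((j : ℝ) + 1)⁻¹ := by
      intro j
      refine le_trans (hxp (σ j)) ?_
      apply inv_anti₀ (by positivity)
      have : (j : ℝ) ≤ (σ j : ℝ) := Nat.cast_le.2 hσ.le_apply
      linarith
    have hgt : Tendsto (fun j : ℕ => ((j : ℝ) + 1)⁻¹) atTop (nhds 0) := by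
      exact tendsto_one_div_add_atTop_nhds_zero_nat.congr (fun n => one_div _)
    exact squeeze_zero_norm hbound hgt
  have hxv : xPart v = 0 := tendsto_nhds_unique hx1 hx0
  have hv0 : v = 0 := eq_zero_of_parts hxv hyv
  have hv1 : ‖v‖ = 1 := mem_sphere_zero_iff_norm.1 hv_sphere
  rw [hv0] at hv1
  simp at hv1
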